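/- Let c_0, c > 0, let β = (β_j) be a sequence of nonnegative reals, and let (Υ_ν) be indexed by finitely supported multi-indices with Υ_0 ≤ c_0 and, for ν ≠ 0, Υ_ν ≤ Σ_{0≠m≤ν, |supp(m)|≤q} c^{|m|} C(ν,m) Υ_{ν−m} Π_{j∈supp(m)} β_j. Then Υ_ν ≤ c_0 · c^{|ν|} · Σ_{m≤ν} m!·D_q(m)·β^m·Π_i S(ν_i,m_i) for all ν, where D_q(0)=1 and D_q(m) = Σ_{u⊆supp(m), 1≤|u|≤q} D_q(m−e_u). -/

import Mathlib

/-- Stirling numbers of the second kind. -/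
def stirling : ℕ → ℕ → ℕ
  | 0, 0 => 1
  | 0, _ + 1 => 0
  | _ + 1, 0 => 0
  | n + 1, m + 1 => (m + 1) * stirling n (m + 1) + stirling n m

/-- Order (total degree) of a finitely supported multi-index. -/
def deg (m : ℕ →₀ ℕ) : ℕ := m.sum fun _ k => k

/-- Multi-index factorial `m! = Π_i (m_i)!`. -/
def mfact (m : ℕ →₀ ℕ) : ℕ := ∏ i ∈ m.support, (m i).factorial

/-- Multivariate binomial coefficient `C(ν, m) = Π_i C(ν_i, m_i)`. -/
def mchoose (ν m : ℕ →₀ ℕ) : ℕ := ∏ i ∈ ν.support, (ν i).choose (m i)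

/-- The multi-index `e_u = Σ_{j ∈ u} e_j`. -/
noncomputable def eU (u : Finset ℕ) : ℕ →₀ ℕ := ∑ j ∈ u, Finsupp.single j 1




lemma stirling_zero_succ (k : ℕ) : stirling 0 (k+1) = 0 := rfl
lemma stirling_succ_zero (n : ℕ) : stirling (n+1) 0 = 0 := rfl
lemma stirling_succ_succ (n k : ℕ) :
    stirling (n+1) (k+1) = (k + 1) * stirling n (k + 1) + stirling n k := rfl

lemma stirling_eq_zero_of_lt : ∀ {n k : ℕ}, n < k → stirling n k = 0 := by
  intro n
  induction n with
  | zero => intro k hk; match k, hk with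
    | k+1, _ => rfl
  | succ n ih =>
    intro k hk
    match k, hk with
    | k+1, hk =>
      rw [stirling_succ_succ, ih (by omega), ih (by omega)]
      simp

lemma stirling_one_right : ∀ n : ℕ, stirling (n+1) 1 = 1 := by
  intro n
  induction n with
  | zero => rfl
  | succ n ih => rw [stirling_succ_succ, ih]; rfl

lemma key1 : ∀ (n k : ℕ), ∑ l ∈ Finset.range (n+1), n.choose l * stirling l k
    = stirling (n+1) (k+1) := by
  intro n
  induction n with
  | zero =>
    intro k
    cases k with
    | zero => rfl
    | succ k => simp [stirling_zero_succ, stirling_succ_succ]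
  | succ n ih =>
    intro k
    have h1 : ∑ l ∈ Finset.range (n+2), (n+1).choose l * stirling l k
        = (∑ j ∈ Finset.range (n+1), (n+1).choose (j+1) * stirling (j+1) k)
          + 1 * stirling 0 k := Finset.sum_range_succ' _ _
    have h2 : ∀ j, (n+1).choose (j+1) = n.choose j + n.choose (j+1) :=
      fun j => Nat.choose_succ_succ n j
    have h3 : (∑ j ∈ Finset.range (n+1), (n+1).choose (j+1) * stirling (j+1) k)
        = (∑ j ∈ Finset.range (n+1), n.choose j * stirling (j+1) k)
          + ∑ j ∈ Finset.range (n+1), n.choose (j+1) * stirling (j+1) k := by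
      rw [← Finset.sum_add_distrib]
      exact Finset.sum_congr rfl fun j _ => by rw [h2, add_mul]
    have h4 : (∑ j ∈ Finset.range (n+1), n.choose (j+1) * stirling (j+1) k)
        + 1 * stirling 0 k
        = ∑ l ∈ Finset.range (n+2), n.choose l * stirling l k := by
      rw [Finset.sum_range_succ' (fun l => n.choose l * stirling l k) (n+1)]
      simp
    have h5 : ∑ l ∈ Finset.range (n+2), n.choose l * stirling l k
        = ∑ l ∈ Finset.range (n+1), n.choose l * stirling l k := by
      rw [Finset.sum_range_succ, Nat.choose_succ_self, zero_mul, add_zero]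
    cases k with
    | zero =>
      have h6 : ∑ j ∈ Finset.range (n+1), n.choose j * stirling (j+1) 0 = 0 :=
        Finset.sum_eq_zero fun j _ => by rw [stirling_succ_zero, mul_zero]
      rw [h1, h3, h6, zero_add, h4, h5, ih 0]
      simp [stirling_one_right]
    | succ k =>
      have h6 : ∑ j ∈ Finset.range (n+1), n.choose j * stirling (j+1) (k+1)
          = (k+1) * ∑ j ∈ Finset.range (n+1), n.choose j * stirling j (k+1)
            + ∑ j ∈ Finset.range (n+1), n.choose j * stirling j k := by
        rw [Finset.mul_sum, ← Finset.sum_add_distrib]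
        exact Finset.sum_congr rfl fun j _ => by rw [stirling_succ_succ]; ring
      have h8 := h4.trans h5
      rw [h1, h3, h6, stirling_succ_succ (n+1) (k+1), ← ih (k+1), ← ih k]
      zify at h8 ⊢
      linear_combination h8

lemma key2 (n k : ℕ) : ∑ l ∈ Finset.Icc 1 n, n.choose l * stirling (n - l) k
    = (k+1) * stirling n (k+1) := by
  have hrefl : ∑ l ∈ Finset.range (n+1), n.choose l * stirling (n - l) k
      = ∑ l ∈ Finset.range (n+1), n.choose l * stirling l k := by
    rw [← Finset.sum_range_reflect]
    refine Finset.sum_congr rfl fun j hj => ?_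
    have hj' : j ≤ n := by
      simpa using Nat.lt_succ_iff.mp (Finset.mem_range.mp hj)
    have e1 : n + 1 - 1 - j = n - j := by omega
    have e2 : n - (n - j) = j := by omega
    rw [e1, e2, Nat.choose_symm hj']
  have hsplit : ∑ l ∈ Finset.range (n+1), n.choose l * stirling (n - l) k
      = (∑ l ∈ Finset.Icc 1 n, n.choose l * stirling (n - l) k)
        + n.choose 0 * stirling (n - 0) k := by
    rw [Finset.sum_range_succ' (fun l => n.choose l * stirling (n - l) k) n]
    congr 1
    rw [show Finset.Icc 1 n = Finset.Ico 1 (n+1) by rfl, Finset.sum_Ico_eq_sum_range]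
    refine Finset.sum_congr (by congr 1) fun j _ => by rw [add_comm 1 j]
  have := hsplit.symm.trans (hrefl.trans (key1 n k))
  rw [stirling_succ_succ] at this
  simp only [Nat.choose_zero_right, Nat.sub_zero, one_mul] at this
  omega

lemma eU_apply (u : Finset ℕ) (a : ℕ) : eU u a = if a ∈ u then 1 else 0 := by
  classical
  simp [eU, Finsupp.finset_sum_apply, Finsupp.single_apply]

lemma multikey (ν k : ℕ →₀ ℕ) : ∀ (u : Finset ℕ),
    ∑ m ∈ (Finset.Iic ν).filter (fun m => m.support = u),
      ∏ i ∈ u, ((ν i).choose (m i) * stirling (ν i - m i) (k i))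
    = ∏ i ∈ u, ((k i + 1) * stirling (ν i) (k i + 1)) := by
  classical
  intro u
  induction u using Finset.induction_on with
  | empty =>
    have h : (Finset.Iic ν).filter (fun m => m.support = (∅ : Finset ℕ)) = {0} := by
      ext m
      simp only [Finset.mem_filter, Finset.mem_Iic, Finsupp.support_eq_empty,
        Finset.mem_singleton]
      constructor
      · rintro ⟨-, h⟩; exact h
      · rintro rfl; exact ⟨zero_le, rfl⟩
    rw [h, Finset.sum_singleton, Finset.prod_empty, Finset.prod_empty]
  | @insert a u ha ih =>
    have hprod : ∑ p ∈ (Finset.Icc 1 (ν a)) ×ˢ ((Finset.Iic ν).filter (fun m => m.support = u)),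
        (((ν a).choose p.1 * stirling (ν a - p.1) (k a))
          * ∏ i ∈ u, ((ν i).choose (p.2 i) * stirling (ν i - p.2 i) (k i)))
        = (∑ l ∈ Finset.Icc 1 (ν a), (ν a).choose l * stirling (ν a - l) (k a)) *
          ∑ m' ∈ (Finset.Iic ν).filter (fun m => m.support = u),
            ∏ i ∈ u, ((ν i).choose (m' i) * stirling (ν i - m' i) (k i)) := by
      rw [Finset.sum_mul_sum]
      exact Finset.sum_product _ _ _
    rw [Finset.prod_insert ha, ← ih, ← key2 (ν a) (k a), ← hprod]
    refine Finset.sum_nbij' (i := fun m => ((m a, m.erase a) : ℕ × (ℕ →₀ ℕ)))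
      (j := fun p => Finsupp.single a p.1 + p.2) ?_ ?_ ?_ ?_ ?_
    · -- hi : m in filter insert → image in product
      intro m hm
      obtain ⟨hle, hsupp⟩ := Finset.mem_filter.mp hm
      rw [Finset.mem_Iic] at hle
      have h1 : m a ≠ 0 := Finsupp.mem_support_iff.mp (hsupp ▸ Finset.mem_insert_self a u)
      refine Finset.mem_product.mpr ⟨?_, ?_⟩
      · exact Finset.mem_Icc.mpr ⟨(by omega : 1 ≤ m a), Finsupp.le_def.mp hle a⟩
      · refine Finset.mem_filter.mpr ⟨Finset.mem_Iic.mpr ?_, ?_⟩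
        · refine Finsupp.le_def.mpr fun i => ?_
          rw [Finsupp.erase_apply]
          split
          · exact Nat.zero_le _
          · exact hle i
        · rw [Finsupp.support_erase, hsupp, Finset.erase_insert ha]
    · -- hj
      rintro ⟨l, m'⟩ hp
      obtain ⟨hl, hm'⟩ := Finset.mem_product.mp hp
      rw [Finset.mem_Icc] at hl
      obtain ⟨hm'le, hm'supp⟩ := Finset.mem_filter.mp hm'
      rw [Finset.mem_Iic] at hm'le
      have ham' : m' a = 0 := by
        by_contra h
        exact ha (hm'supp ▸ Finsupp.mem_support_iff.mpr h)
      have hsupp : (Finsupp.single a l + m').support = insert a u := by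
        rw [Finsupp.support_add_eq, Finsupp.support_single_ne_zero a (by omega), hm'supp]
        · rfl
        · rw [Finsupp.support_single_ne_zero a (by omega), hm'supp]
          simp [Finset.disjoint_singleton_left, ha]
      have hm'le2 : ∀ i, m' i ≤ ν i := fun i => Finsupp.le_def.mp hm'le i
      refine Finset.mem_filter.mpr ⟨Finset.mem_Iic.mpr (Finsupp.le_def.mpr fun i => ?_), hsupp⟩
      rcases eq_or_ne i a with rfl | hia
      · have : (Finsupp.single i l + m') i = l + m' i := by
          rw [Finsupp.add_apply, Finsupp.single_eq_same]
        rw [this, ham']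
        have := hm'le2 i
        omega
      · have : (Finsupp.single a l + m') i = m' i := by
          rw [Finsupp.add_apply, Finsupp.single_apply, if_neg (Ne.symm hia), zero_add]
        rw [this]
        exact hm'le2 i
    · -- left_inv : j (i m) = m for m in filter insert
      intro m hm
      simp only
      exact Finsupp.single_add_erase a m
    · -- right_inv : i (j p) = p for p in product
      rintro ⟨l, m'⟩ hp
      obtain ⟨hl, hm'⟩ := Finset.mem_product.mp hp
      rw [Finset.mem_Icc] at hl
      obtain ⟨-, hm'supp⟩ := Finset.mem_filter.mp hm'
      have ham' : m' a = 0 := by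
        by_contra h
        exact ha (hm'supp ▸ Finsupp.mem_support_iff.mpr h)
      simp only
      rw [Prod.mk.injEq]
      constructor
      · simp [Finsupp.single_apply, ham']
      · rw [Finsupp.erase_add, Finsupp.erase_single, zero_add,
          Finsupp.erase_of_notMem_support (by rw [hm'supp]; exact ha)]
    · -- summand equality
      intro m hm
      obtain ⟨-, hsupp⟩ := Finset.mem_filter.mp hm
      simp only
      rw [Finset.prod_insert ha]
      congr 1
      refine Finset.prod_congr rfl fun i hi => ?_
      have hia : i ≠ a := fun h => ha (h ▸ hi)
      rw [Finsupp.erase_apply, if_neg hia]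

lemma deg_add (x y : ℕ →₀ ℕ) : deg (x + y) = deg x + deg y :=
  Finsupp.sum_add_index' (fun _ => rfl) (fun _ _ _ => rfl)

lemma deg_eq_zero {ν : ℕ →₀ ℕ} (h : deg ν = 0) : ν = 0 := by
  by_contra hν
  obtain ⟨i, hi⟩ := Finsupp.support_nonempty_iff.mpr hν
  have h1 : ν i ≠ 0 := Finsupp.mem_support_iff.mp hi
  have h2 : ν i ≤ deg ν := Finset.single_le_sum (fun _ _ => Nat.zero_le _) hi
  omega

lemma deg_pos {ν : ℕ →₀ ℕ} (h : ν ≠ 0) : 1 ≤ deg ν := by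
  rcases Nat.eq_zero_or_pos (deg ν) with h0 | h0
  · exact absurd (deg_eq_zero h0) h
  · exact h0

lemma deg_sub_add {m ν : ℕ →₀ ℕ} (h : m ≤ ν) : deg (ν - m) + deg m = deg ν := by
  rw [← deg_add]
  congr 1
  exact tsub_add_cancel_of_le h

lemma support_eU (u : Finset ℕ) : (eU u).support ⊆ u := by
  intro i hi
  have := Finsupp.mem_support_iff.mp hi
  rw [eU_apply] at this
  by_contra h
  exact this (if_neg h)

lemma add_eU_apply (k : ℕ →₀ ℕ) (u : Finset ℕ) (i : ℕ) :
    (k + eU u) i = k i + (if i ∈ u then 1 else 0) := by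
  rw [Finsupp.add_apply, eU_apply]

lemma support_add_eU (k : ℕ →₀ ℕ) (u : Finset ℕ) :
    (k + eU u).support ⊆ k.support ∪ u :=
  Finsupp.support_add.trans (Finset.union_subset_union (le_refl _) (support_eU u))

lemma mfact_superset {m : ℕ →₀ ℕ} {s : Finset ℕ} (h : m.support ⊆ s) :
    (mfact m : ℕ) = ∏ i ∈ s, (m i).factorial :=
  Finset.prod_subset h fun i _ hi => by
    rw [Finsupp.notMem_support_iff.mp hi]; rfl

lemma bpow_superset (β : ℕ → ℝ) {m : ℕ →₀ ℕ} {s : Finset ℕ} (h : m.support ⊆ s) :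
    (∏ j ∈ m.support, β j ^ m j) = ∏ j ∈ s, β j ^ m j :=
  Finset.prod_subset h fun i _ hi => by
    rw [Finsupp.notMem_support_iff.mp hi, pow_zero]

lemma mfact_add_eU (k : ℕ →₀ ℕ) (u : Finset ℕ) :
    mfact (k + eU u) = mfact k * ∏ i ∈ u, (k i + 1) := by
  rw [mfact_superset (support_add_eU k u),
    mfact_superset (Finset.subset_union_left (s₁ := k.support) (s₂ := u)),
    show (∏ i ∈ u, (k i + 1)) = ∏ i ∈ k.support ∪ u, (if i ∈ u then k i + 1 else 1) from
      (Finset.prod_subset Finset.subset_union_right fun i _ hi => if_neg hi).symm.trans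
        (Finset.prod_congr rfl fun i hi => by rw [if_pos hi]).symm |>.symm,
    ← Finset.prod_mul_distrib]
  refine Finset.prod_congr rfl fun i _ => ?_
  rw [add_eU_apply]
  split
  · rw [Nat.factorial_succ]; ring
  · rw [Nat.add_zero, Nat.mul_one]

lemma bpow_add_eU (β : ℕ → ℝ) (k : ℕ →₀ ℕ) (u : Finset ℕ) :
    (∏ j ∈ (k + eU u).support, β j ^ (k + eU u) j)
      = (∏ j ∈ k.support, β j ^ k j) * ∏ j ∈ u, β j := by
  rw [bpow_superset β (support_add_eU k u),
    bpow_superset β (Finset.subset_union_left (s₁ := k.support) (s₂ := u)),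
    show (∏ j ∈ u, β j) = ∏ j ∈ k.support ∪ u, (if j ∈ u then β j else 1) from
      (Finset.prod_subset Finset.subset_union_right fun i _ hi => if_neg hi).symm.trans
        (Finset.prod_congr rfl fun i hi => by rw [if_pos hi]).symm |>.symm,
    ← Finset.prod_mul_distrib]
  refine Finset.prod_congr rfl fun i _ => ?_
  rw [add_eU_apply]
  split
  · rw [pow_succ]
  · rw [Nat.add_zero, mul_one]

lemma P_add_eU {ν : ℕ →₀ ℕ} {u : Finset ℕ} (hu : u ⊆ ν.support) (k : ℕ →₀ ℕ) :
    (∏ i ∈ ν.support, ((stirling (ν i) ((k + eU u) i) : ℕ) : ℝ))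
      = (∏ i ∈ ν.support \ u, ((stirling (ν i) (k i) : ℕ) : ℝ))
        * ∏ i ∈ u, ((stirling (ν i) (k i + 1) : ℕ) : ℝ) := by
  rw [← Finset.prod_sdiff hu]
  congr 1
  · refine Finset.prod_congr rfl fun i hi => ?_
    rw [add_eU_apply, if_neg (Finset.mem_sdiff.mp hi).2, Nat.add_zero]
  · refine Finset.prod_congr rfl fun i hi => ?_
    rw [add_eU_apply, if_pos hi]

noncomputable def Gdef (β : ℕ → ℝ) (D : (ℕ →₀ ℕ) → ℕ) (ν : ℕ →₀ ℕ) : ℝ :=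
  ∑ m ∈ Finset.Iic ν,
    (mfact m : ℝ) * D m * (∏ j ∈ m.support, β j ^ m j) *
      ∏ i ∈ ν.support, ((stirling (ν i) (m i) : ℕ) : ℝ)

lemma Gdef_nonneg (β : ℕ → ℝ) (hβ : ∀ j, 0 ≤ β j) (D : (ℕ →₀ ℕ) → ℕ) (ν : ℕ →₀ ℕ) :
    0 ≤ Gdef β D ν := by
  refine Finset.sum_nonneg fun m _ => ?_
  have h1 : (0:ℝ) ≤ ∏ j ∈ m.support, β j ^ m j :=
    Finset.prod_nonneg fun j _ => pow_nonneg (hβ j) _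
  have h2 : (0:ℝ) ≤ ∏ i ∈ ν.support, ((stirling (ν i) (m i) : ℕ) : ℝ) :=
    Finset.prod_nonneg fun i _ => Nat.cast_nonneg _
  positivity

lemma Gdef_extend (β : ℕ → ℝ) (D : (ℕ →₀ ℕ) → ℕ) {ν m : ℕ →₀ ℕ} (hm : m ≤ ν) :
    Gdef β D (ν - m) = ∑ k ∈ Finset.Iic ν,
      (mfact k : ℝ) * D k * (∏ j ∈ k.support, β j ^ k j) *
        ∏ i ∈ ν.support, ((stirling ((ν - m) i) (k i) : ℕ) : ℝ) := by
  have hsub : ν - m ≤ ν := tsub_le_self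
  have hstep1 : Gdef β D (ν - m) = ∑ k ∈ Finset.Iic (ν - m),
      (mfact k : ℝ) * D k * (∏ j ∈ k.support, β j ^ k j) *
        ∏ i ∈ ν.support, ((stirling ((ν - m) i) (k i) : ℕ) : ℝ) := by
    refine Finset.sum_congr rfl fun k hk => ?_
    rw [Finset.mem_Iic] at hk
    congr 1
    refine Finset.prod_subset (Finsupp.support_mono hsub) fun i _ hi => ?_
    have h1 : (ν - m) i = 0 := Finsupp.notMem_support_iff.mp hi
    have h2 : k i = 0 := by have := Finsupp.le_def.mp hk i; omega
    rw [h1, h2, show stirling 0 0 = 1 from rfl, Nat.cast_one]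
  rw [hstep1]
  refine Finset.sum_subset (Finset.Iic_subset_Iic.mpr hsub) fun k hk hk' => ?_
  rw [Finset.mem_Iic] at hk hk'
  rw [Finsupp.le_def, not_forall] at hk'
  obtain ⟨i, hi⟩ := hk'
  rw [not_le] at hi
  have h1 : i ∈ ν.support := by
    have h2 := Finsupp.le_def.mp hk i
    have h3 : (ν - m) i ≤ ν i := Finsupp.le_def.mp hsub i
    exact Finsupp.mem_support_iff.mpr (by omega)
  have h4 : ((stirling ((ν - m) i) (k i) : ℕ) : ℝ) = 0 := by
    rw [stirling_eq_zero_of_lt hi, Nat.cast_zero]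
  rw [Finset.prod_eq_zero h1 h4, mul_zero]

lemma natkey {ν : ℕ →₀ ℕ} {u : Finset ℕ} (hu : u ⊆ ν.support) (k : ℕ →₀ ℕ) :
    ∑ m ∈ (Finset.Iic ν).filter (fun m => m.support = u),
      (mchoose ν m) * ∏ i ∈ ν.support, stirling ((ν - m) i) (k i)
    = (∏ i ∈ ν.support \ u, stirling (ν i) (k i))
        * ∏ i ∈ u, ((k i + 1) * stirling (ν i) (k i + 1)) := by
  classical
  rw [← multikey ν k u, Finset.mul_sum]
  refine Finset.sum_congr rfl fun m hm => ?_
  obtain ⟨hle, hsupp⟩ := Finset.mem_filter.mp hm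
  have h1 : (mchoose ν m) * ∏ i ∈ ν.support, stirling ((ν - m) i) (k i)
      = ∏ i ∈ ν.support, ((ν i).choose (m i) * stirling (ν i - m i) (k i)) := by
    rw [mchoose, ← Finset.prod_mul_distrib]
    exact Finset.prod_congr rfl fun i _ => by rw [Finsupp.tsub_apply]
  rw [h1, ← Finset.prod_sdiff hu]
  congr 1
  refine Finset.prod_congr rfl fun i hi => ?_
  have h2 : m i = 0 := by
    rw [← Finsupp.notMem_support_iff, hsupp]
    exact (Finset.mem_sdiff.mp hi).2
  rw [h2, Nat.choose_zero_right, Nat.sub_zero, one_mul]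

noncomputable def tfun (β : ℕ → ℝ) (D : (ℕ →₀ ℕ) → ℕ) (ν : ℕ →₀ ℕ) (u : Finset ℕ)
    (k : ℕ →₀ ℕ) : ℝ :=
  (mfact (k + eU u) : ℝ) * D k * (∏ j ∈ (k + eU u).support, β j ^ (k + eU u) j) *
    ∏ i ∈ ν.support, ((stirling (ν i) ((k + eU u) i) : ℕ) : ℝ)

lemma add_sub_eU (k : ℕ →₀ ℕ) (u : Finset ℕ) : k + eU u - eU u = k := by
  ext i
  rw [Finsupp.tsub_apply, add_eU_apply, eU_apply]
  split <;> omega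

lemma sub_add_eU {n : ℕ →₀ ℕ} {u : Finset ℕ} (h : u ⊆ n.support) : n - eU u + eU u = n := by
  ext i
  rw [Finsupp.add_apply, Finsupp.tsub_apply, eU_apply]
  split
  · have : n i ≠ 0 := Finsupp.mem_support_iff.mp (h ‹_›)
    omega
  · omega

lemma hA2 (q : ℕ) (β : ℕ → ℝ) (D : (ℕ →₀ ℕ) → ℕ) (ν : ℕ →₀ ℕ) {u : Finset ℕ}
    (hup : u ⊆ ν.support) :
    ∑ m ∈ (Finset.Iic ν).filter (fun m => m.support = u),
      (mchoose ν m : ℝ) * (∏ j ∈ m.support, β j) * Gdef β D (ν - m)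
    = ∑ k ∈ Finset.Iic ν, tfun β D ν u k := by
  classical
  have e1 : ∀ m ∈ (Finset.Iic ν).filter (fun m => m.support = u),
      (mchoose ν m : ℝ) * (∏ j ∈ m.support, β j) * Gdef β D (ν - m)
      = ∑ k ∈ Finset.Iic ν, (mchoose ν m : ℝ) * (∏ j ∈ u, β j) *
          ((mfact k : ℝ) * D k * (∏ j ∈ k.support, β j ^ k j) *
            ∏ i ∈ ν.support, ((stirling ((ν - m) i) (k i) : ℕ) : ℝ)) := by
    intro m hm
    obtain ⟨hle, hsupp⟩ := Finset.mem_filter.mp hm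
    rw [Finset.mem_Iic] at hle
    rw [Gdef_extend β D hle, hsupp, Finset.mul_sum]
  rw [Finset.sum_congr rfl e1, Finset.sum_comm]
  refine Finset.sum_congr rfl fun k _ => ?_
  have e2 : ∑ m ∈ (Finset.Iic ν).filter (fun m => m.support = u),
      (mchoose ν m : ℝ) * (∏ j ∈ u, β j) *
        ((mfact k : ℝ) * D k * (∏ j ∈ k.support, β j ^ k j) *
          ∏ i ∈ ν.support, ((stirling ((ν - m) i) (k i) : ℕ) : ℝ))
      = (∏ j ∈ u, β j) * ((mfact k : ℝ) * D k * (∏ j ∈ k.support, β j ^ k j)) *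
        ∑ m ∈ (Finset.Iic ν).filter (fun m => m.support = u),
          (mchoose ν m : ℝ) * ∏ i ∈ ν.support, ((stirling ((ν - m) i) (k i) : ℕ) : ℝ) := by
    rw [Finset.mul_sum]
    exact Finset.sum_congr rfl fun m _ => by ring
  rw [e2]
  have e3 : ∑ m ∈ (Finset.Iic ν).filter (fun m => m.support = u),
      (mchoose ν m : ℝ) * ∏ i ∈ ν.support, ((stirling ((ν - m) i) (k i) : ℕ) : ℝ)
      = ((∏ i ∈ ν.support \ u, stirling (ν i) (k i))
          * ∏ i ∈ u, ((k i + 1) * stirling (ν i) (k i + 1)) : ℕ) := by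
    rw [← natkey hup k]
    push_cast
    rfl
  rw [e3, tfun, mfact_add_eU, bpow_add_eU, P_add_eU hup, Finset.prod_mul_distrib]
  push_cast
  ring

lemma hA3 (β : ℕ → ℝ) (D : (ℕ →₀ ℕ) → ℕ) (ν : ℕ →₀ ℕ) {u : Finset ℕ}
    (hup : u ⊆ ν.support) :
    ∑ k ∈ Finset.Iic ν, tfun β D ν u k = ∑ k ∈ Finset.Iic (ν - eU u), tfun β D ν u k := by
  refine (Finset.sum_subset (Finset.Iic_subset_Iic.mpr tsub_le_self) fun k hk hk' => ?_).symm
  rw [Finset.mem_Iic] at hk hk'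
  rw [Finsupp.le_def, not_forall] at hk'
  obtain ⟨i, hi⟩ := hk'
  rw [not_le, Finsupp.tsub_apply] at hi
  have hkν := Finsupp.le_def.mp hk i
  have hiu : i ∈ u := by
    by_contra h
    rw [eU_apply, if_neg h] at hi
    omega
  have hiν : i ∈ ν.support := hup hiu
  have hν1 : ν i ≠ 0 := Finsupp.mem_support_iff.mp hiν
  have hlt : ν i < (k + eU u) i := by
    rw [add_eU_apply, if_pos hiu]
    rw [eU_apply, if_pos hiu] at hi
    omega
  have h0 : ((stirling (ν i) ((k + eU u) i) : ℕ) : ℝ) = 0 := by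
    rw [stirling_eq_zero_of_lt hlt, Nat.cast_zero]
  rw [tfun, Finset.prod_eq_zero hiν h0, mul_zero]

lemma hB (q : ℕ) (β : ℕ → ℝ) (D : (ℕ →₀ ℕ) → ℕ)
    (hDrec : ∀ m : ℕ →₀ ℕ, m ≠ 0 →
      D m = ∑ u ∈ m.support.powerset.filter (fun u => 1 ≤ u.card ∧ u.card ≤ q),
        D (m - eU u))
    (ν : ℕ →₀ ℕ) :
    ∑ u ∈ ν.support.powerset.filter (fun u => 1 ≤ u.card ∧ u.card ≤ q),
      ∑ k ∈ Finset.Iic (ν - eU u), tfun β D ν u k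
    = ∑ n ∈ (Finset.Iic ν).erase 0,
        (mfact n : ℝ) * D n * (∏ j ∈ n.support, β j ^ n j) *
          ∏ i ∈ ν.support, ((stirling (ν i) (n i) : ℕ) : ℝ) := by
  classical
  have hR : ∀ n ∈ (Finset.Iic ν).erase 0,
      (mfact n : ℝ) * D n * (∏ j ∈ n.support, β j ^ n j) *
        ∏ i ∈ ν.support, ((stirling (ν i) (n i) : ℕ) : ℝ)
      = ∑ u ∈ n.support.powerset.filter (fun u => 1 ≤ u.card ∧ u.card ≤ q),
          (mfact n : ℝ) * D (n - eU u) * (∏ j ∈ n.support, β j ^ n j) *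
            ∏ i ∈ ν.support, ((stirling (ν i) (n i) : ℕ) : ℝ) := by
    intro n hn
    have hn0 : n ≠ 0 := (Finset.mem_erase.mp hn).1
    rw [hDrec n hn0, Nat.cast_sum, Finset.mul_sum, Finset.sum_mul, Finset.sum_mul]
  rw [Finset.sum_congr rfl hR]
  rw [Finset.sum_sigma', Finset.sum_sigma']
  refine Finset.sum_nbij'
    (i := fun p => (⟨p.2 + eU p.1, p.1⟩ : Σ _ : ℕ →₀ ℕ, Finset ℕ))
    (j := fun p => (⟨p.2, p.1 - eU p.2⟩ : Σ _ : Finset ℕ, ℕ →₀ ℕ)) ?_ ?_ ?_ ?_ ?_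
  · rintro ⟨u, k⟩ hp
    obtain ⟨hu, hk⟩ := Finset.mem_sigma.mp hp
    obtain ⟨hup, hc1, hc2⟩ : u ⊆ ν.support ∧ 1 ≤ u.card ∧ u.card ≤ q := by
      have h := Finset.mem_filter.mp hu
      exact ⟨Finset.mem_powerset.mp h.1, h.2.1, h.2.2⟩
    rw [Finset.mem_Iic] at hk
    have hkle : ∀ i, k i ≤ ν i - eU u i := fun i => by
      have := Finsupp.le_def.mp hk i
      rwa [Finsupp.tsub_apply] at this
    have heν : ∀ i, eU u i ≤ ν i := by
      intro i
      rw [eU_apply]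
      split
      · have : ν i ≠ 0 := Finsupp.mem_support_iff.mp (hup ‹_›)
        omega
      · omega
    have hsum : k + eU u ≤ ν := Finsupp.le_def.mpr fun i => by
      rw [Finsupp.add_apply]
      have := hkle i
      have := heν i
      omega
    have husupp : u ⊆ (k + eU u).support := by
      intro i hi
      refine Finsupp.mem_support_iff.mpr ?_
      rw [add_eU_apply, if_pos hi]
      omega
    refine Finset.mem_sigma.mpr ⟨Finset.mem_erase.mpr ⟨?_, Finset.mem_Iic.mpr hsum⟩, ?_⟩
    · intro h
      obtain ⟨a, ha⟩ := Finset.card_pos.mp hc1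
      have h2 := Finsupp.ext_iff.mp h a
      rw [add_eU_apply, if_pos ha] at h2
      simp only [Finsupp.coe_zero, Pi.zero_apply] at h2
      omega
    · exact Finset.mem_filter.mpr ⟨Finset.mem_powerset.mpr husupp, hc1, hc2⟩
  · rintro ⟨n, u⟩ hp
    obtain ⟨hn, hu⟩ := Finset.mem_sigma.mp hp
    obtain ⟨hn0, hnle⟩ := Finset.mem_erase.mp hn
    rw [Finset.mem_Iic] at hnle
    obtain ⟨hun, hc1, hc2⟩ : u ⊆ n.support ∧ 1 ≤ u.card ∧ u.card ≤ q := by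
      have h := Finset.mem_filter.mp hu
      exact ⟨Finset.mem_powerset.mp h.1, h.2.1, h.2.2⟩
    refine Finset.mem_sigma.mpr ⟨?_, ?_⟩
    · exact Finset.mem_filter.mpr
        ⟨Finset.mem_powerset.mpr (hun.trans (Finsupp.support_mono hnle)), hc1, hc2⟩
    · refine Finset.mem_Iic.mpr (Finsupp.le_def.mpr fun i => ?_)
      dsimp only
      rw [Finsupp.tsub_apply, Finsupp.tsub_apply]
      have h3 : n i ≤ ν i := Finsupp.le_def.mp hnle i
      omega
  · rintro ⟨u, k⟩ _
    dsimp only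
    rw [add_sub_eU]
  · rintro ⟨n, u⟩ hp
    obtain ⟨hn, hu⟩ := Finset.mem_sigma.mp hp
    have hun : u ⊆ n.support := Finset.mem_powerset.mp (Finset.mem_filter.mp hu).1
    dsimp only
    rw [sub_add_eU hun]
  · rintro ⟨u, k⟩ _
    dsimp only
    simp only [tfun, add_sub_eU]

lemma term_nonneg (β : ℕ → ℝ) (hβ : ∀ j, 0 ≤ β j) (D : (ℕ →₀ ℕ) → ℕ) (ν n : ℕ →₀ ℕ) :
    0 ≤ (mfact n : ℝ) * D n * (∏ j ∈ n.support, β j ^ n j) *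
      ∏ i ∈ ν.support, ((stirling (ν i) (n i) : ℕ) : ℝ) := by
  have h1 : (0:ℝ) ≤ ∏ j ∈ n.support, β j ^ n j :=
    Finset.prod_nonneg fun j _ => pow_nonneg (hβ j) _
  have h2 : (0:ℝ) ≤ ∏ i ∈ ν.support, ((stirling (ν i) (n i) : ℕ) : ℝ) :=
    Finset.prod_nonneg fun i _ => Nat.cast_nonneg _
  positivity

lemma KEY (q : ℕ) (β : ℕ → ℝ) (hβ : ∀ j, 0 ≤ β j) (D : (ℕ →₀ ℕ) → ℕ)
    (hDrec : ∀ m : ℕ →₀ ℕ, m ≠ 0 →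
      D m = ∑ u ∈ m.support.powerset.filter (fun u => 1 ≤ u.card ∧ u.card ≤ q),
        D (m - eU u))
    (ν : ℕ →₀ ℕ) :
    ∑ m ∈ ((Finset.Iic ν).erase 0).filter (fun m => m.support.card ≤ q),
      (mchoose ν m : ℝ) * (∏ j ∈ m.support, β j) * Gdef β D (ν - m)
    ≤ Gdef β D ν := by
  classical
  have maps : ∀ m ∈ ((Finset.Iic ν).erase 0).filter (fun m => m.support.card ≤ q),
      m.support ∈ ν.support.powerset.filter (fun u => 1 ≤ u.card ∧ u.card ≤ q) := by
    intro m hm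
    obtain ⟨hm1, hm2⟩ := Finset.mem_filter.mp hm
    obtain ⟨hm0, hmle⟩ := Finset.mem_erase.mp hm1
    rw [Finset.mem_Iic] at hmle
    refine Finset.mem_filter.mpr
      ⟨Finset.mem_powerset.mpr (Finsupp.support_mono hmle), ?_, hm2⟩
    exact Finset.card_pos.mpr (Finsupp.support_nonempty_iff.mpr hm0)
  have hA1 : ∑ m ∈ ((Finset.Iic ν).erase 0).filter (fun m => m.support.card ≤ q),
      (mchoose ν m : ℝ) * (∏ j ∈ m.support, β j) * Gdef β D (ν - m)
      = ∑ u ∈ ν.support.powerset.filter (fun u => 1 ≤ u.card ∧ u.card ≤ q),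
        ∑ m ∈ (Finset.Iic ν).filter (fun m => m.support = u),
          (mchoose ν m : ℝ) * (∏ j ∈ m.support, β j) * Gdef β D (ν - m) := by
    rw [← Finset.sum_fiberwise_of_maps_to maps]
    refine Finset.sum_congr rfl fun u hu => Finset.sum_congr ?_ (fun _ _ => rfl)
    obtain ⟨hup, hc1, hc2⟩ : u ⊆ ν.support ∧ 1 ≤ u.card ∧ u.card ≤ q := by
      have h := Finset.mem_filter.mp hu
      exact ⟨Finset.mem_powerset.mp h.1, h.2.1, h.2.2⟩
    ext m
    simp only [Finset.mem_filter, Finset.mem_erase, Finset.mem_Iic]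
    constructor
    · rintro ⟨⟨⟨-, h1⟩, -⟩, h2⟩
      exact ⟨h1, h2⟩
    · rintro ⟨h1, h2⟩
      have hm0 : m ≠ 0 := by
        intro h0
        rw [h0, Finsupp.support_zero] at h2
        rw [← h2] at hc1
        simp at hc1
      exact ⟨⟨⟨hm0, h1⟩, h2 ▸ hc2⟩, h2⟩
  rw [hA1]
  have hA23 : ∀ u ∈ ν.support.powerset.filter (fun u => 1 ≤ u.card ∧ u.card ≤ q),
      ∑ m ∈ (Finset.Iic ν).filter (fun m => m.support = u),
        (mchoose ν m : ℝ) * (∏ j ∈ m.support, β j) * Gdef β D (ν - m)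
      = ∑ k ∈ Finset.Iic (ν - eU u), tfun β D ν u k := by
    intro u hu
    have hup : u ⊆ ν.support := Finset.mem_powerset.mp (Finset.mem_filter.mp hu).1
    rw [hA2 q β D ν hup, hA3 β D ν hup]
  rw [Finset.sum_congr rfl hA23, hB q β D hDrec ν]
  refine Finset.sum_le_sum_of_subset_of_nonneg (Finset.erase_subset 0 (Finset.Iic ν))
    fun n _ _ => term_nonneg β hβ D ν n

theorem stmt_18 (q : ℕ) (hq : 1 ≤ q) (c₀ c : ℝ) (hc₀ : 0 < c₀) (hc : 0 < c)
    (β : ℕ → ℝ) (hβ : ∀ j, 0 ≤ β j)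
    (D : (ℕ →₀ ℕ) → ℕ) (hD0 : D 0 = 1)
    (hDrec : ∀ m : ℕ →₀ ℕ, m ≠ 0 →
      D m = ∑ u ∈ m.support.powerset.filter (fun u => 1 ≤ u.card ∧ u.card ≤ q),
        D (m - eU u))
    (Υ : (ℕ →₀ ℕ) → ℝ) (hΥnn : ∀ ν, 0 ≤ Υ ν)
    (h0 : Υ 0 ≤ c₀)
    (hrec : ∀ ν : ℕ →₀ ℕ, ν ≠ 0 →
      Υ ν ≤ ∑ m ∈ ((Finset.Iic ν).erase 0).filter (fun m => m.support.card ≤ q),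
        c ^ deg m * mchoose ν m * Υ (ν - m) * ∏ j ∈ m.support, β j) :
    ∀ ν : ℕ →₀ ℕ,
      Υ ν ≤ c₀ * c ^ deg ν *
        ∑ m ∈ Finset.Iic ν,
          (mfact m : ℝ) * D m * (∏ j ∈ m.support, β j ^ m j) *
            ∏ i ∈ ν.support, ((stirling (ν i) (m i) : ℕ) : ℝ) := by
  classical
  have hG0 : Gdef β D 0 = 1 := by
    have hIic : Finset.Iic (0 : ℕ →₀ ℕ) = {0} := by
      ext m
      simp [le_zero_iff]
    rw [Gdef, hIic, Finset.sum_singleton]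
    simp [mfact, hD0, Finsupp.support_zero]
  have base : Υ 0 ≤ c₀ * c ^ deg (0 : ℕ →₀ ℕ) * Gdef β D 0 := by
    have : deg (0 : ℕ →₀ ℕ) = 0 := rfl
    rw [this, hG0, pow_zero, mul_one, mul_one]
    exact h0
  suffices H : ∀ N, ∀ ν : ℕ →₀ ℕ, deg ν ≤ N → Υ ν ≤ c₀ * c ^ deg ν * Gdef β D ν by
    exact fun ν => H (deg ν) ν le_rfl
  intro N
  induction N with
  | zero =>
    intro ν hν
    have h0' : ν = 0 := deg_eq_zero (Nat.le_zero.mp hν)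
    subst h0'
    exact base
  | succ N ih =>
    intro ν hν
    rcases eq_or_ne ν 0 with rfl | hν0
    · exact base
    calc Υ ν ≤ ∑ m ∈ ((Finset.Iic ν).erase 0).filter (fun m => m.support.card ≤ q),
          c ^ deg m * mchoose ν m * Υ (ν - m) * ∏ j ∈ m.support, β j := hrec ν hν0
      _ ≤ ∑ m ∈ ((Finset.Iic ν).erase 0).filter (fun m => m.support.card ≤ q),
          c ^ deg m * mchoose ν m * (c₀ * c ^ deg (ν - m) * Gdef β D (ν - m)) *
            ∏ j ∈ m.support, β j := by
          refine Finset.sum_le_sum fun m hm => ?_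
          obtain ⟨hm1, -⟩ := Finset.mem_filter.mp hm
          obtain ⟨hm0, hmle⟩ := Finset.mem_erase.mp hm1
          rw [Finset.mem_Iic] at hmle
          have hdeg : deg (ν - m) ≤ N := by
            have h1 := deg_sub_add hmle
            have h2 := deg_pos hm0
            omega
          have hΥ := ih (ν - m) hdeg
          have hb : (0:ℝ) ≤ ∏ j ∈ m.support, β j :=
            Finset.prod_nonneg fun j _ => hβ j
          have hcm : (0:ℝ) ≤ c ^ deg m * mchoose ν m := by positivity
          exact mul_le_mul_of_nonneg_right
            (mul_le_mul_of_nonneg_left hΥ hcm) hb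
      _ = c₀ * c ^ deg ν * ∑ m ∈ ((Finset.Iic ν).erase 0).filter
            (fun m => m.support.card ≤ q),
          (mchoose ν m : ℝ) * (∏ j ∈ m.support, β j) * Gdef β D (ν - m) := by
          rw [Finset.mul_sum]
          refine Finset.sum_congr rfl fun m hm => ?_
          obtain ⟨hm1, -⟩ := Finset.mem_filter.mp hm
          obtain ⟨-, hmle⟩ := Finset.mem_erase.mp hm1
          rw [Finset.mem_Iic] at hmle
          have e : c ^ deg m * c ^ deg (ν - m) = c ^ deg ν := by
            rw [← pow_add]
            congr 1
            have := deg_sub_add hmle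
            omega
          rw [← e]
          ring
      _ ≤ c₀ * c ^ deg ν * Gdef β D ν := by
          refine mul_le_mul_of_nonneg_left (KEY q β hβ D hDrec ν) ?_
          positivity
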